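/- arXiv:2604.14686 — 3 statements merged into one kernel-verified Lean document; each statement's English description precedes it below -/
import Mathlib

section
/- For every positive integer k with 2 ≤ k ≤ n − 2, the local energy of the complete graph K_n equals the local energy of the disjoint union K_{n−k} ∪ K_k: e(K_n) = e(K_{n−k} ∪ K_k). -/
open SimpleGraph Matrix Finset

noncomputable section

/-- The adjacency matrix of a simple graph over `ℝ` is Hermitian. -/
lemma adjMatrix_isHermitian {V : Type*} [Fintype V] (G : SimpleGraph V)
    [DecidableRel G.Adj] : (G.adjMatrix ℝ).IsHermitian := by
  rw [Matrix.IsHermitian, Matrix.conjTranspose_eq_transpose_of_trivial]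
  exact G.isSymm_adjMatrix

/-- The energy of a finite simple graph: the sum of the absolute values of the
eigenvalues of its adjacency matrix. -/
def graphEnergy {V : Type*} [Fintype V] [DecidableEq V] (G : SimpleGraph V) : ℝ :=
  letI := Classical.decRel G.Adj
  ∑ i, |(adjMatrix_isHermitian G).eigenvalues i|

/-- The local energy of `G` at a vertex `v`: the energy of `G` minus the energy of the
induced subgraph obtained by deleting `v`. -/
def localEnergyAt {V : Type*} [Fintype V] [DecidableEq V] (G : SimpleGraph V) (v : V) : ℝ :=
  graphEnergy G - graphEnergy (G.induce {u | u ≠ v})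

/-- The local energy of `G`: the sum of the local energies at all vertices. -/
def localEnergy {V : Type*} [Fintype V] [DecidableEq V] (G : SimpleGraph V) : ℝ :=
  ∑ v, localEnergyAt G v

end

/-! ### Auxiliary material -/

noncomputable section Aux

open Polynomial

section Matrices

variable {n : Type*} [Fintype n] [DecidableEq n]

lemma aux_charmatrix_conj (P Q A : Matrix n n ℝ) (hPQ : P * Q = 1) :
    charmatrix (P * A * Q) = P.map C * charmatrix A * Q.map C := by
  have hmap : ∀ (X Y : Matrix n n ℝ), (X * Y).map (C : ℝ →+* ℝ[X]) = X.map C * Y.map C :=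
    fun X Y => Matrix.map_mul
  unfold charmatrix
  rw [Matrix.mul_sub, Matrix.sub_mul]
  congr 1
  · rw [← (scalar_commute (X : ℝ[X]) (fun r' => Commute.all _ _) (P.map C)).eq,
      Matrix.mul_assoc, ← hmap, hPQ]
    simp
  · rw [RingHom.mapMatrix_apply, hmap, hmap, Matrix.mul_assoc]
    rw [Matrix.mul_assoc, RingHom.mapMatrix_apply]

lemma aux_charpoly_conj (P Q A : Matrix n n ℝ) (hPQ : P * Q = 1) :
    (P * A * Q).charpoly = A.charpoly := by
  have hdet : (P.map (C : ℝ →+* ℝ[X])).det * (Q.map C).det = 1 := by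
    rw [← det_mul, ← Matrix.map_mul, hPQ]
    simp
  rw [Matrix.charpoly, aux_charmatrix_conj P Q A hPQ, det_mul, det_mul, Matrix.charpoly]
  ring_nf
  rw [mul_comm, ← mul_assoc]
  rw [mul_comm (Q.map C).det]
  rw [hdet, one_mul]

lemma aux_charpoly_diagonal (d : n → ℝ) :
    (diagonal d).charpoly = ∏ i, (X - C (d i)) := by
  rw [Matrix.charpoly]
  have : charmatrix (diagonal d) = diagonal fun i => (X : ℝ[X]) - C (d i) := by
    refine Matrix.ext fun i j => ?_
    by_cases h : i = j
    · subst h; rw [charmatrix_apply_eq]; simp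
    · rw [charmatrix_apply_ne _ _ _ h, diagonal_apply_ne _ h, diagonal_apply_ne _ h]
      simp
  rw [this, det_diagonal]

lemma aux_hermitian_charpoly_eq {A : Matrix n n ℝ} (hA : A.IsHermitian) :
    A.charpoly = ∏ i, (X - C (hA.eigenvalues i)) := by
  have hU := (Matrix.mem_unitaryGroup_iff).mp (hA.eigenvectorUnitary).2
  have h2 : A = (hA.eigenvectorUnitary : Matrix n n ℝ) * diagonal hA.eigenvalues
      * (star (hA.eigenvectorUnitary : Matrix n n ℝ)) := by
    have h3 := hA.spectral_theorem
    rwa [show (RCLike.ofReal ∘ hA.eigenvalues : n → ℝ) = hA.eigenvalues from funext fun i => rfl]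
      at h3
  conv_lhs => rw [h2]
  rw [aux_charpoly_conj _ _ _ hU, aux_charpoly_diagonal]

lemma aux_hermitian_roots_charpoly {A : Matrix n n ℝ} (hA : A.IsHermitian) :
    A.charpoly.roots = Finset.univ.val.map hA.eigenvalues := by
  rw [aux_hermitian_charpoly_eq hA, ← Polynomial.roots_multiset_prod_X_sub_C
      (Finset.univ.val.map hA.eigenvalues)]
  congr 1
  rw [Multiset.map_map]
  rfl

/-- The sum of the absolute values of the roots of the characteristic polynomial. -/
def energyM (A : Matrix n n ℝ) : ℝ := (A.charpoly.roots.map (fun x => |x|)).sum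

lemma aux_hermitian_sum_abs {A : Matrix n n ℝ} (hA : A.IsHermitian) :
    ∑ i, |hA.eigenvalues i| = energyM A := by
  rw [energyM, aux_hermitian_roots_charpoly hA, Multiset.map_map]
  rfl

lemma aux_hermitian_trace_eq {A : Matrix n n ℝ} (hA : A.IsHermitian) :
    A.trace = ∑ i, hA.eigenvalues i := by
  have hU := (Matrix.mem_unitaryGroup_iff).mp (hA.eigenvectorUnitary).2
  have h := congrArg Matrix.trace (show star (hA.eigenvectorUnitary : Matrix n n ℝ) * A
      * (hA.eigenvectorUnitary : Matrix n n ℝ) = diagonal (RCLike.ofReal ∘ hA.eigenvalues) by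
    have h0 := hA.conjStarAlgAut_star_eigenvectorUnitary
    rwa [Unitary.conjStarAlgAut_star_apply] at h0)
  rw [Matrix.trace_mul_cycle, hU, Matrix.one_mul, trace_diagonal] at h
  rw [h]
  rfl

end Matrices

section Graphs

variable {V : Type*} [Fintype V] [DecidableEq V]

lemma graphEnergy_eq_energyM (G : SimpleGraph V) [inst : DecidableRel G.Adj] :
    graphEnergy G = energyM (G.adjMatrix ℝ) := by
  unfold graphEnergy
  rw [aux_hermitian_sum_abs]
  congr 1
  refine Matrix.ext fun i j => ?_
  by_cases h : G.Adj i j <;> simp [h]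

lemma graphEnergy_iso {W : Type*} [Fintype W] [DecidableEq W] {G : SimpleGraph V}
    {H : SimpleGraph W} (e : G ≃g H) : graphEnergy G = graphEnergy H := by
  classical
  rw [graphEnergy_eq_energyM G, graphEnergy_eq_energyM H]
  have hAB : H.adjMatrix ℝ = (Matrix.reindex e.toEquiv e.toEquiv) (G.adjMatrix ℝ) := by
    refine Matrix.ext fun i j => ?_
    rw [Matrix.reindex_apply, Matrix.submatrix_apply]
    by_cases h : H.Adj i j
    · rw [SimpleGraph.adjMatrix_apply, SimpleGraph.adjMatrix_apply, if_pos h, if_pos]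
      exact e.symm.map_adj_iff.mpr h
    · rw [SimpleGraph.adjMatrix_apply, SimpleGraph.adjMatrix_apply, if_neg h, if_neg]
      exact fun hc => h (by simpa using e.symm.map_adj_iff.mp hc)
  rw [hAB]
  unfold energyM
  rw [Matrix.charpoly_reindex]

lemma adjMatrix_sumg {α β : Type*} [Fintype α] [Fintype β] [DecidableEq α] [DecidableEq β]
    (G : SimpleGraph α) (H : SimpleGraph β)
    [DecidableRel G.Adj] [DecidableRel H.Adj] [DecidableRel (G ⊕g H).Adj] :
    (G ⊕g H).adjMatrix ℝ = Matrix.fromBlocks (G.adjMatrix ℝ) 0 0 (H.adjMatrix ℝ) := by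
  refine Matrix.ext fun i j => ?_
  cases i <;> cases j <;>
    simp [SimpleGraph.adjMatrix_apply, Matrix.fromBlocks]

lemma graphEnergy_sumg {α β : Type*} [Fintype α] [Fintype β] [DecidableEq α] [DecidableEq β]
    (G : SimpleGraph α) (H : SimpleGraph β) :
    graphEnergy (G ⊕g H) = graphEnergy G + graphEnergy H := by
  classical
  rw [graphEnergy_eq_energyM, graphEnergy_eq_energyM, graphEnergy_eq_energyM, adjMatrix_sumg]
  unfold energyM
  rw [Matrix.charpoly_fromBlocks_zero₁₂,
    Polynomial.roots_mul (mul_ne_zero (Matrix.charpoly_monic _).ne_zero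
      (Matrix.charpoly_monic _).ne_zero),
    Multiset.map_add, Multiset.sum_add]

lemma induce_top_eq (s : Set V) :
    (⊤ : SimpleGraph V).induce s = (⊤ : SimpleGraph s) := by
  ext a b
  simp [Subtype.coe_injective.ne_iff]

/-- Deleting the vertex `Sum.inl w` from a sum type. -/
def delInl {α β : Type*} [DecidableEq α] (w : α) :
    {u : α ⊕ β // u ≠ Sum.inl w} ≃ ({x : α // x ≠ w} ⊕ β) where
  toFun u := match u with
    | ⟨Sum.inl a, h⟩ => Sum.inl ⟨a, fun ha => h (by rw [ha])⟩
    | ⟨Sum.inr b, _⟩ => Sum.inr b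
  invFun u := Sum.elim (fun a => ⟨Sum.inl a.1, by simp [a.2]⟩) (fun b => ⟨Sum.inr b, by simp⟩) u
  left_inv := by rintro ⟨(a | b), h⟩ <;> simp
  right_inv := by rintro (a | b) <;> simp

/-- Deleting the vertex `Sum.inr w` from a sum type. -/
def delInr {α β : Type*} [DecidableEq β] (w : β) :
    {u : α ⊕ β // u ≠ Sum.inr w} ≃ (α ⊕ {x : β // x ≠ w}) where
  toFun u := match u with
    | ⟨Sum.inl a, _⟩ => Sum.inl a
    | ⟨Sum.inr b, h⟩ => Sum.inr ⟨b, fun hb => h (by rw [hb])⟩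
  invFun u := Sum.elim (fun a => ⟨Sum.inl a, by simp⟩) (fun b => ⟨Sum.inr b.1, by simp [b.2]⟩) u
  left_inv := by rintro ⟨(a | b), h⟩ <;> simp
  right_inv := by rintro (a | b) <;> simp

def delInlIso {α β : Type*} [DecidableEq α] (G : SimpleGraph α) (H : SimpleGraph β) (w : α) :
    ((G ⊕g H).induce {u | u ≠ Sum.inl w}) ≃g ((G.induce {x | x ≠ w}) ⊕g H) := by
  refine ⟨delInl w, ?_⟩
  rintro ⟨(a | b), ha⟩ ⟨(c | d), hc⟩ <;>
    simp [delInl, SimpleGraph.comap]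

def delInrIso {α β : Type*} [DecidableEq β] (G : SimpleGraph α) (H : SimpleGraph β) (w : β) :
    ((G ⊕g H).induce {u | u ≠ Sum.inr w}) ≃g (G ⊕g (H.induce {x | x ≠ w})) := by
  refine ⟨delInr w, ?_⟩
  rintro ⟨(a | b), ha⟩ ⟨(c | d), hc⟩ <;>
    simp [delInr, SimpleGraph.comap]

lemma localEnergyAt_sumg_inl {α β : Type*} [Fintype α] [Fintype β] [DecidableEq α]
    [DecidableEq β] (G : SimpleGraph α) (H : SimpleGraph β) (w : α) :
    localEnergyAt (G ⊕g H) (Sum.inl w) = localEnergyAt G w := by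
  unfold localEnergyAt
  rw [graphEnergy_sumg, graphEnergy_iso (delInlIso G H w), graphEnergy_sumg]
  ring

lemma localEnergyAt_sumg_inr {α β : Type*} [Fintype α] [Fintype β] [DecidableEq α]
    [DecidableEq β] (G : SimpleGraph α) (H : SimpleGraph β) (w : β) :
    localEnergyAt (G ⊕g H) (Sum.inr w) = localEnergyAt H w := by
  unfold localEnergyAt
  rw [graphEnergy_sumg, graphEnergy_iso (delInrIso G H w), graphEnergy_sumg]
  ring

lemma localEnergy_sumg {α β : Type*} [Fintype α] [Fintype β] [DecidableEq α] [DecidableEq β]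
    (G : SimpleGraph α) (H : SimpleGraph β) :
    localEnergy (G ⊕g H) = localEnergy G + localEnergy H := by
  unfold localEnergy
  rw [Fintype.sum_sum_type]
  simp only [localEnergyAt_sumg_inl, localEnergyAt_sumg_inr]

lemma top_adjMatrix_sq [inst : DecidableRel (⊤ : SimpleGraph V).Adj] :
    (⊤ : SimpleGraph V).adjMatrix ℝ * (⊤ : SimpleGraph V).adjMatrix ℝ
      = ((Fintype.card V : ℝ) - 2) • (⊤ : SimpleGraph V).adjMatrix ℝ
        + ((Fintype.card V : ℝ) - 1) • 1 := by
  refine Matrix.ext fun i j => ?_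
  rw [Matrix.mul_apply]
  have hsum : (∑ k, (⊤ : SimpleGraph V).adjMatrix ℝ i k * (⊤ : SimpleGraph V).adjMatrix ℝ k j)
      = ∑ k, (if i ≠ k ∧ k ≠ j then (1:ℝ) else 0) := by
    refine Finset.sum_congr rfl fun k _ => ?_
    by_cases h1 : i = k <;> by_cases h2 : k = j <;> simp [h1, h2]
  rw [hsum, Finset.sum_boole]
  by_cases hij : i = j
  · subst hij
    have h1 : (Finset.univ.filter fun k => i ≠ k ∧ k ≠ i) = Finset.univ.erase i := by
      ext k; simp [ne_comm, and_self_iff]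
    have hm : 1 ≤ Fintype.card V := Fintype.card_pos_iff.mpr ⟨i⟩
    rw [h1, Finset.card_erase_of_mem (Finset.mem_univ i)]
    simp only [Matrix.add_apply, Matrix.smul_apply, SimpleGraph.adjMatrix_apply, top_adj,
      ne_eq, not_true_eq_false, if_false, Matrix.one_apply_eq, smul_eq_mul, mul_zero, mul_one,
      zero_add, Finset.card_univ]
    push_cast [hm]
    ring
  · have h1 : (Finset.univ.filter fun k => i ≠ k ∧ k ≠ j) = Finset.univ \ {i, j} := by
      ext k
      simp only [Finset.mem_filter, Finset.mem_univ, true_and, Finset.mem_sdiff,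
        Finset.mem_insert, Finset.mem_singleton]
      tauto
    have hc2 : ({i, j} : Finset V).card = 2 := by
      rw [Finset.card_insert_of_notMem (by simp [hij]), Finset.card_singleton]
    have hm : 2 ≤ Fintype.card V := by
      calc 2 = ({i, j} : Finset V).card := hc2.symm
        _ ≤ _ := by simpa using Finset.card_le_univ _
    rw [h1, Finset.card_sdiff_of_subset (Finset.subset_univ _), hc2]
    simp only [Matrix.add_apply, Matrix.smul_apply, SimpleGraph.adjMatrix_apply, top_adj,
      ne_eq, hij, not_false_eq_true, if_true, Matrix.one_apply_ne hij, smul_eq_mul, mul_one,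
      mul_zero, add_zero, Finset.card_univ]
    push_cast [hm]
    ring

lemma top_eigenvalue_quadratic [inst : DecidableRel (⊤ : SimpleGraph V).Adj]
    (hA : ((⊤ : SimpleGraph V).adjMatrix ℝ).IsHermitian) (i : V) :
    (hA.eigenvalues i - ((Fintype.card V : ℝ) - 1)) * (hA.eigenvalues i + 1) = 0 := by
  set A := (⊤ : SimpleGraph V).adjMatrix ℝ
  set lam := hA.eigenvalues i with hlam
  have hv := hA.mulVec_eigenvectorBasis i
  have hv2 : (A * A) *ᵥ ⇑(hA.eigenvectorBasis i) = (lam * lam) • ⇑(hA.eigenvectorBasis i) := by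
    rw [← Matrix.mulVec_mulVec, hv, Matrix.mulVec_smul, hv, smul_smul]
  rw [top_adjMatrix_sq, Matrix.add_mulVec, Matrix.smul_mulVec, Matrix.smul_mulVec,
    Matrix.one_mulVec, hv] at hv2
  have hvne : ⇑(hA.eigenvectorBasis i) ≠ 0 := by
    intro h
    have h0 : hA.eigenvectorBasis i = 0 := by
      ext x; exact congrFun h x
    have := hA.eigenvectorBasis.orthonormal.1 i
    rw [h0] at this
    simp at this
  obtain ⟨x, hx⟩ : ∃ x, ⇑(hA.eigenvectorBasis i) x ≠ 0 := by
    by_contra h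
    push_neg at h
    exact hvne (funext fun x => h x)
  have hx2 := congrFun hv2 x
  simp only [Pi.add_apply, Pi.smul_apply, smul_eq_mul] at hx2
  have key : (lam * lam - ((Fintype.card V : ℝ) - 2) * lam - ((Fintype.card V : ℝ) - 1))
      * ⇑(hA.eigenvectorBasis i) x = 0 := by
    rw [hlam]
    ring_nf
    ring_nf at hx2
    linarith [hx2]
  have h0 := (mul_eq_zero.mp key).resolve_right hx
  nlinarith [h0]

lemma sum_abs_eigenvalues_top [inst : DecidableRel (⊤ : SimpleGraph V).Adj]
    (hA : ((⊤ : SimpleGraph V).adjMatrix ℝ).IsHermitian) (h : 1 ≤ Fintype.card V) :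
    ∑ i, |hA.eigenvalues i| = 2 * (Fintype.card V : ℝ) - 2 := by
  set m := (Fintype.card V : ℝ) with hmdef
  have hm1 : (1:ℝ) ≤ m := by rw [hmdef]; exact_mod_cast h
  have hm0 : m ≠ 0 := by linarith
  have htr : ∑ i, hA.eigenvalues i = 0 := by
    rw [← aux_hermitian_trace_eq hA, SimpleGraph.trace_adjMatrix]
  have habs : ∀ i, |hA.eigenvalues i| = ((m - 2) * hA.eigenvalues i + (2 * m - 2)) / m := by
    intro i
    have hq := top_eigenvalue_quadratic hA i
    rcases mul_eq_zero.mp hq with h1 | h1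
    · have he : hA.eigenvalues i = m - 1 := by rw [hmdef]; linarith [h1]
      rw [he, abs_of_nonneg (by linarith)]
      field_simp
      ring
    · have he : hA.eigenvalues i = -1 := by linarith [h1]
      rw [he, abs_of_nonpos (by norm_num)]
      field_simp
      ring
  rw [Finset.sum_congr rfl fun i _ => habs i, ← Finset.sum_div, Finset.sum_add_distrib,
    ← Finset.mul_sum, htr, mul_zero, zero_add, Finset.sum_const, Finset.card_univ,
    nsmul_eq_mul, ← hmdef, mul_comm, mul_div_assoc, div_self hm0, mul_one]

lemma graphEnergy_top (h : 1 ≤ Fintype.card V) :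
    graphEnergy (⊤ : SimpleGraph V) = 2 * (Fintype.card V : ℝ) - 2 := by
  unfold graphEnergy
  exact sum_abs_eigenvalues_top (inst := Classical.decRel _) _ h

lemma card_ne_subtype (v : V) :
    Fintype.card {u : V | u ≠ v} = Fintype.card V - 1 := by
  have h := Fintype.card_subtype_compl (fun u : V => u = v)
  rw [Fintype.card_subtype_eq] at h
  calc Fintype.card {u : V | u ≠ v} = Fintype.card {u : V // ¬ u = v} :=
        Fintype.card_congr (Equiv.subtypeEquivRight fun _ => Iff.rfl)
    _ = _ := h

lemma localEnergy_top (h : 2 ≤ Fintype.card V) :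
    localEnergy (⊤ : SimpleGraph V) = 2 * (Fintype.card V : ℝ) := by
  unfold localEnergy localEnergyAt
  have hcard : ∀ v : V, graphEnergy ((⊤ : SimpleGraph V).induce {u | u ≠ v})
      = 2 * ((Fintype.card V : ℝ) - 1) - 2 := by
    intro v
    rw [induce_top_eq, graphEnergy_top (by rw [card_ne_subtype]; omega)]
    rw [card_ne_subtype]
    have : (1:ℕ) ≤ Fintype.card V := by omega
    push_cast [this]
    ring
  have htop := graphEnergy_top (V := V) (by omega)
  calc (∑ v : V, (graphEnergy (⊤ : SimpleGraph V)
          - graphEnergy ((⊤ : SimpleGraph V).induce {u | u ≠ v})))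
      = ∑ _v : V, (2:ℝ) := by
        refine Finset.sum_congr rfl fun v _ => ?_
        rw [htop, hcard v]; ring
    _ = 2 * (Fintype.card V : ℝ) := by
        rw [Finset.sum_const, Finset.card_univ, nsmul_eq_mul]; ring

end Graphs

end Aux

/-- for `2 ≤ k ≤ n - 2`, `e(K_n) = e(K_{n-k} ∪ K_k)`. -/
theorem localEnergy_completeGraph_split (n k : ℕ) (hk : 2 ≤ k) (hkn : k ≤ n - 2) :
    localEnergy (⊤ : SimpleGraph (Fin n)) =
      localEnergy ((⊤ : SimpleGraph (Fin (n - k))) ⊕g (⊤ : SimpleGraph (Fin k))) := by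
  have hn : k + 2 ≤ n := by omega
  have h1 : localEnergy ((⊤ : SimpleGraph (Fin (n - k))) ⊕g (⊤ : SimpleGraph (Fin k)))
      = localEnergy (⊤ : SimpleGraph (Fin (n - k))) + localEnergy (⊤ : SimpleGraph (Fin k)) :=
    localEnergy_sumg _ _
  rw [h1, localEnergy_top (by simp; omega), localEnergy_top (by simp; omega),
    localEnergy_top (by simp; omega)]
  simp only [Fintype.card_fin]
  have hkle : k ≤ n := by omega
  push_cast [hkle]
  ring
end

section
/- The graphs K₄ ∪ P₃ and K₂ ∪ K₂ ∪ P₃ are locally equienergetic: e(K₄ ∪ P₃) = e(K₂ ∪ K₂ ∪ P₃). -/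
open SimpleGraph Matrix Finset Polynomial

section CharpolyMachinery

variable {n : Type*} [Fintype n] [DecidableEq n]
lemma charpoly_unitary_conj (U : Matrix.unitaryGroup n ℝ) (D : Matrix n n ℝ) :
    ((U : Matrix n n ℝ) * D * star (U : Matrix n n ℝ)).charpoly = D.charpoly := by
  have hmap : ∀ M : Matrix n n ℝ, (M.map (C : ℝ →+* ℝ[X])) = (RingHom.mapMatrix (C : ℝ →+* ℝ[X])) M := fun _ => rfl
  have h1 : (U : Matrix n n ℝ) * star (U : Matrix n n ℝ) = 1 :=
    (Matrix.mem_unitaryGroup_iff.mp U.2)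
  have h2 : star (U : Matrix n n ℝ) * (U : Matrix n n ℝ) = 1 :=
    (Matrix.mem_unitaryGroup_iff'.mp U.2)
  unfold Matrix.charpoly
  have key : charmatrix ((U : Matrix n n ℝ) * D * star (U : Matrix n n ℝ))
      = (U : Matrix n n ℝ).map C * charmatrix D * ((star (U : Matrix n n ℝ)).map C) := by
    rw [charmatrix]
    rw [charmatrix]
    rw [Matrix.mul_sub, Matrix.sub_mul]
    congr 1
    · have hc : ∀ M : Matrix n n ℝ[X],
          (Matrix.scalar n (X:ℝ[X])) * M = M * (Matrix.scalar n (X:ℝ[X])) :=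
        fun M => (Matrix.scalar_commute (X:ℝ[X]) (Commute.all _) M).eq
      rw [← hc, Matrix.mul_assoc, ← Matrix.map_mul, h1]
      simp
    · simp only [RingHom.mapMatrix_apply]
      rw [← Matrix.map_mul, ← Matrix.map_mul]
  rw [key, det_mul, det_mul, mul_comm, ← mul_assoc, ← det_mul, ← Matrix.map_mul, h2]
  simp

lemma charpoly_eq_prod_eigenvalues (A : Matrix n n ℝ) (hA : A.IsHermitian) :
    A.charpoly = ((Finset.univ.val.map hA.eigenvalues).map fun a => X - C a).prod := by
  conv_lhs => rw [hA.spectral_theorem]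
  rw [Unitary.conjStarAlgAut_apply, charpoly_unitary_conj]
  have hdiag : (Matrix.diagonal (RCLike.ofReal ∘ hA.eigenvalues) : Matrix n n ℝ).charpoly
      = ∏ i, (X - C (hA.eigenvalues i)) := by
    classical
    letI : LinearOrder n := IsWellOrder.linearOrder (WellOrderingRel)
    rw [Matrix.charpoly_of_upperTriangular _ (Matrix.blockTriangular_diagonal _)]
    simp [RCLike.ofReal]
  rw [hdiag]
  rw [Finset.prod, Multiset.map_map]
  rfl

lemma roots_charpoly (A : Matrix n n ℝ) (hA : A.IsHermitian) :
    A.charpoly.roots = Finset.univ.val.map hA.eigenvalues := by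
  rw [charpoly_eq_prod_eigenvalues A hA, Polynomial.roots_multiset_prod_X_sub_C]

end CharpolyMachinery

noncomputable def EE {V : Type*} [Fintype V] [DecidableEq V] (G : SimpleGraph V) : ℝ :=
  letI := Classical.decRel G.Adj
  (((G.adjMatrix ℝ).charpoly).roots.map fun x => |x|).sum

lemma graphEnergy_eq {V : Type*} [Fintype V] [DecidableEq V] (G : SimpleGraph V) :
    graphEnergy G = EE G := by
  letI := Classical.decRel G.Adj
  rw [graphEnergy, EE, roots_charpoly _ (adjMatrix_isHermitian G), Multiset.map_map]
  rfl
lemma EE_congr {V W : Type*} [Fintype V] [DecidableEq V] [Fintype W] [DecidableEq W]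
    (G : SimpleGraph V) (H : SimpleGraph W) (e : V ≃ W)
    (h : ∀ a b, G.Adj a b ↔ H.Adj (e a) (e b)) : EE G = EE H := by
  letI := Classical.decRel G.Adj
  letI := Classical.decRel H.Adj
  have hM : (Matrix.reindex e e (G.adjMatrix ℝ)) = H.adjMatrix ℝ := by
    ext i j
    simp only [Matrix.reindex_apply, Matrix.submatrix_apply, SimpleGraph.adjMatrix_apply]
    by_cases hadj : H.Adj i j
    · rw [if_pos hadj, if_pos]
      rw [h]
      simpa using hadj
    · rw [if_neg hadj, if_neg]
      rw [h]
      simpa using hadj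
  rw [EE, EE, ← hM, Matrix.charpoly_reindex]

lemma EE_sum {V W : Type*} [Fintype V] [DecidableEq V] [Fintype W] [DecidableEq W]
    (G : SimpleGraph V) (H : SimpleGraph W) : EE (G ⊕g H) = EE G + EE H := by
  letI := Classical.decRel G.Adj
  letI := Classical.decRel H.Adj
  letI := Classical.decRel (G ⊕g H).Adj
  have hM : ((G ⊕g H).adjMatrix ℝ) =
      Matrix.fromBlocks (G.adjMatrix ℝ) 0 0 (H.adjMatrix ℝ) := by
    ext i j
    rcases i with i | i <;> rcases j with j | j <;>
      simp [SimpleGraph.adjMatrix_apply, Matrix.fromBlocks]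
  rw [EE, EE, EE, hM, Matrix.charpoly_fromBlocks_zero₁₂, Polynomial.roots_mul, Multiset.map_add,
    Multiset.sum_add]
  exact mul_ne_zero (Matrix.charpoly_monic _).ne_zero (Matrix.charpoly_monic _).ne_zero

lemma EE_of_charpoly {V : Type*} [Fintype V] [DecidableEq V] (G : SimpleGraph V)
    (m : Multiset ℝ)
    (h : (letI := Classical.decRel G.Adj; (G.adjMatrix ℝ).charpoly) = (m.map fun a => X - C a).prod) :
    EE G = (m.map fun x => |x|).sum := by
  rw [EE, h, Polynomial.roots_multiset_prod_X_sub_C]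
lemma charmatrix_fin3 (M : Matrix (Fin 3) (Fin 3) ℝ) :
    charmatrix M = !![X - C (M 0 0), - C (M 0 1), - C (M 0 2);
      - C (M 1 0), X - C (M 1 1), - C (M 1 2);
      - C (M 2 0), - C (M 2 1), X - C (M 2 2)] := by
  ext i j
  fin_cases i <;> fin_cases j <;>
    simp [Matrix.charmatrix_apply_eq, Matrix.charmatrix_apply_ne]

lemma EE_top3 : EE (⊤ : SimpleGraph (Fin 3)) = 4 := by
  have h := EE_of_charpoly (⊤ : SimpleGraph (Fin 3)) {2, -1, -1} ?_
  · rw [h]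
    simp only [Multiset.insert_eq_cons, Multiset.map_cons, Multiset.map_singleton,
      Multiset.sum_cons, Multiset.sum_singleton]
    norm_num
  · have hA : (letI := Classical.decRel (⊤ : SimpleGraph (Fin 3)).Adj;
        ((⊤ : SimpleGraph (Fin 3)).adjMatrix ℝ)) = !![0,1,1;1,0,1;1,1,0] := by
      ext i j
      fin_cases i <;> fin_cases j <;>
        simp [SimpleGraph.adjMatrix_apply, Matrix.vecHead, Matrix.vecTail]
    rw [hA, Matrix.charpoly, charmatrix_fin3]
    norm_num [Matrix.det_fin_three, Matrix.cons_val_two, Matrix.cons_val_three, Matrix.vecHead, Matrix.vecTail]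
    simp only [Multiset.insert_eq_cons, Multiset.map_cons, Multiset.prod_cons,
      Multiset.map_singleton, Multiset.prod_singleton, _root_.map_neg, _root_.map_one,
      _root_.map_ofNat]
    ring

lemma charmatrix_fin2 (M : Matrix (Fin 2) (Fin 2) ℝ) :
    charmatrix M = !![X - C (M 0 0), - C (M 0 1); - C (M 1 0), X - C (M 1 1)] := by
  ext i j
  fin_cases i <;> fin_cases j <;>
    simp [Matrix.charmatrix_apply_eq, Matrix.charmatrix_apply_ne]

lemma charmatrix_fin4 (M : Matrix (Fin 4) (Fin 4) ℝ) :
    charmatrix M = !![X - C (M 0 0), - C (M 0 1), - C (M 0 2), - C (M 0 3);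
      - C (M 1 0), X - C (M 1 1), - C (M 1 2), - C (M 1 3);
      - C (M 2 0), - C (M 2 1), X - C (M 2 2), - C (M 2 3);
      - C (M 3 0), - C (M 3 1), - C (M 3 2), X - C (M 3 3)] := by
  ext i j
  fin_cases i <;> fin_cases j <;>
    simp [Matrix.charmatrix_apply_eq, Matrix.charmatrix_apply_ne]

lemma EE_top4 : EE (⊤ : SimpleGraph (Fin 4)) = 6 := by
  have h := EE_of_charpoly (⊤ : SimpleGraph (Fin 4)) {3, -1, -1, -1} ?_
  · rw [h]
    simp only [Multiset.insert_eq_cons, Multiset.map_cons, Multiset.map_singleton,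
      Multiset.sum_cons, Multiset.sum_singleton]
    norm_num
  · have hA : (letI := Classical.decRel (⊤ : SimpleGraph (Fin 4)).Adj;
        ((⊤ : SimpleGraph (Fin 4)).adjMatrix ℝ)) = !![0,1,1,1;1,0,1,1;1,1,0,1;1,1,1,0] := by
      ext i j
      fin_cases i <;> fin_cases j <;>
        simp [SimpleGraph.adjMatrix_apply, Matrix.vecHead, Matrix.vecTail]
    rw [hA, Matrix.charpoly, charmatrix_fin4]
    rw [Matrix.det_succ_row_zero]
    simp only [Fin.sum_univ_succ, Fin.sum_univ_zero, Matrix.det_fin_three]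
    simp [Fin.succAbove, Fin.lt_def, Matrix.submatrix]
    simp only [Multiset.insert_eq_cons, Multiset.map_cons, Multiset.prod_cons,
      Multiset.map_singleton, Multiset.prod_singleton, _root_.map_neg, _root_.map_one,
      _root_.map_ofNat]
    ring

lemma EE_top2 : EE (⊤ : SimpleGraph (Fin 2)) = 2 := by
  have h := EE_of_charpoly (⊤ : SimpleGraph (Fin 2)) {1, -1} ?_
  · rw [h]
    simp only [Multiset.insert_eq_cons, Multiset.map_cons, Multiset.map_singleton,
      Multiset.sum_cons, Multiset.sum_singleton]
    norm_num
  · have hA : (letI := Classical.decRel (⊤ : SimpleGraph (Fin 2)).Adj;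
        ((⊤ : SimpleGraph (Fin 2)).adjMatrix ℝ)) = !![0,1;1,0] := by
      ext i j
      fin_cases i <;> fin_cases j <;>
        simp [SimpleGraph.adjMatrix_apply, Matrix.vecHead, Matrix.vecTail]
    rw [hA, Matrix.charpoly, charmatrix_fin2]
    norm_num [Matrix.det_fin_two, Matrix.vecHead, Matrix.vecTail]
    ring

lemma EE_top1 : EE (⊤ : SimpleGraph (Fin 1)) = 0 := by
  have h := EE_of_charpoly (⊤ : SimpleGraph (Fin 1)) {0} ?_
  · rw [h]; simp
  · have hA : (letI := Classical.decRel (⊤ : SimpleGraph (Fin 1)).Adj;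
        ((⊤ : SimpleGraph (Fin 1)).adjMatrix ℝ)) = !![0] := by
      ext i j
      fin_cases i <;> fin_cases j <;> simp [SimpleGraph.adjMatrix_apply]
    rw [hA, Matrix.charpoly]
    have : charmatrix (!![0] : Matrix (Fin 1) (Fin 1) ℝ) = !![X] := by
      ext i j
      fin_cases i <;> fin_cases j <;>
        simp [Matrix.charmatrix_apply_eq]
    rw [this, Matrix.det_fin_one]
    simp

lemma EE_bot2 : EE (⊥ : SimpleGraph (Fin 2)) = 0 := by
  have h := EE_of_charpoly (⊥ : SimpleGraph (Fin 2)) {0, 0} ?_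
  · rw [h]; simp
  · have hA : (letI := Classical.decRel (⊥ : SimpleGraph (Fin 2)).Adj;
        ((⊥ : SimpleGraph (Fin 2)).adjMatrix ℝ)) = !![0,0;0,0] := by
      ext i j
      fin_cases i <;> fin_cases j <;> simp [SimpleGraph.adjMatrix_apply]
    rw [hA, Matrix.charpoly, charmatrix_fin2]
    norm_num [Matrix.det_fin_two]

lemma EE_path3 : EE (pathGraph 3) = 2 * Real.sqrt 2 := by
  have h := EE_of_charpoly (pathGraph 3) {Real.sqrt 2, -Real.sqrt 2, 0} ?_
  · rw [h]
    simp only [Multiset.insert_eq_cons, Multiset.map_cons, Multiset.map_singleton,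
      Multiset.sum_cons, Multiset.sum_singleton, abs_neg]
    rw [abs_of_nonneg (Real.sqrt_nonneg 2)]
    ring_nf
  · have hA : (letI := Classical.decRel (pathGraph 3).Adj;
        ((pathGraph 3).adjMatrix ℝ)) = !![0,1,0;1,0,1;0,1,0] := by
      ext i j
      fin_cases i <;> fin_cases j <;>
        simp [SimpleGraph.adjMatrix_apply, SimpleGraph.pathGraph_adj,
          Matrix.vecHead, Matrix.vecTail]
    rw [hA, Matrix.charpoly, charmatrix_fin3]
    norm_num [Matrix.det_fin_three, Matrix.cons_val_two, Matrix.vecHead, Matrix.vecTail]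
    have hs : C (Real.sqrt 2) * C (Real.sqrt 2) = (2 : ℝ[X]) := by
      rw [← _root_.map_mul, Real.mul_self_sqrt (by norm_num), _root_.map_ofNat]
    linear_combination (X : ℝ[X]) * hs
lemma EE_eq_top {V W : Type*} [Fintype V] [DecidableEq V] [Fintype W] [DecidableEq W]
    (G : SimpleGraph V) (e : V ≃ W) (h : ∀ a b, G.Adj a b ↔ a ≠ b) :
    EE G = EE (⊤ : SimpleGraph W) := by
  refine EE_congr G _ e fun a b => ?_
  rw [SimpleGraph.top_adj, h]
  exact (e.injective.ne_iff).symm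

lemma EE_eq_bot {V W : Type*} [Fintype V] [DecidableEq V] [Fintype W] [DecidableEq W]
    (G : SimpleGraph V) (e : V ≃ W) (h : ∀ a b, ¬ G.Adj a b) :
    EE G = EE (⊥ : SimpleGraph W) := by
  refine EE_congr G _ e fun a b => ?_
  simp [h a b]

/-- Deleting `inl v` from a disjoint sum. -/
def delSumEquivL {V W : Type*} [DecidableEq V] (v : V) :
    {u : V ⊕ W // u ∈ {u | u ≠ Sum.inl v}} ≃ ({u : V // u ∈ {u | u ≠ v}} ⊕ W) where
  toFun x := match x with
    | ⟨Sum.inl a, h⟩ => Sum.inl ⟨a, fun hh => h (by simp [Set.mem_setOf_eq] at hh ⊢; exact hh)⟩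
    | ⟨Sum.inr b, _⟩ => Sum.inr b
  invFun x := Sum.elim (fun a => ⟨Sum.inl a.1, by simp only [Set.mem_setOf_eq, ne_eq, Sum.inl.injEq]; exact a.2⟩) (fun b => ⟨Sum.inr b, by simp⟩) x
  left_inv x := by
    rcases x with ⟨(a | b), h⟩ <;> rfl
  right_inv x := by
    rcases x with (⟨a, ha⟩ | b) <;> rfl

/-- Deleting `inr v` from a disjoint sum. -/
def delSumEquivR {V W : Type*} [DecidableEq W] (v : W) :
    {u : V ⊕ W // u ∈ {u | u ≠ Sum.inr v}} ≃ (V ⊕ {u : W // u ∈ {u | u ≠ v}}) where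
  toFun x := match x with
    | ⟨Sum.inl a, _⟩ => Sum.inl a
    | ⟨Sum.inr b, h⟩ => Sum.inr ⟨b, fun hh => h (by simp [Set.mem_setOf_eq] at hh ⊢; exact hh)⟩
  invFun x := Sum.elim (fun a => ⟨Sum.inl a, by simp⟩) (fun b => ⟨Sum.inr b.1, by simp only [Set.mem_setOf_eq, ne_eq, Sum.inr.injEq]; exact b.2⟩) x
  left_inv x := by
    rcases x with ⟨(a | b), h⟩ <;> rfl
  right_inv x := by
    rcases x with (a | ⟨b, hb⟩) <;> rfl

lemma EE_induce_sum_inl {V W : Type*} [Fintype V] [DecidableEq V] [Fintype W] [DecidableEq W]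
    (G : SimpleGraph V) (H : SimpleGraph W) (v : V) :
    EE ((G ⊕g H).induce {u | u ≠ Sum.inl v}) = EE (G.induce {u | u ≠ v}) + EE H := by
  rw [← EE_sum]
  refine EE_congr _ _ (delSumEquivL v) fun a b => ?_
  rcases a with ⟨(a | a), ha⟩ <;> rcases b with ⟨(b | b), hb⟩ <;>
    simp [delSumEquivL]

lemma EE_induce_sum_inr {V W : Type*} [Fintype V] [DecidableEq V] [Fintype W] [DecidableEq W]
    (G : SimpleGraph V) (H : SimpleGraph W) (v : W) :
    EE ((G ⊕g H).induce {u | u ≠ Sum.inr v}) = EE G + EE (H.induce {u | u ≠ v}) := by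
  rw [← EE_sum]
  refine EE_congr _ _ (delSumEquivR v) fun a b => ?_
  rcases a with ⟨(a | a), ha⟩ <;> rcases b with ⟨(b | b), hb⟩ <;>
    simp [delSumEquivR]

lemma card_del {V : Type*} [Fintype V] [DecidableEq V] (v : V) {k : ℕ}
    (h : Fintype.card V = k + 1) :
    Fintype.card {u : V // u ∈ {u | u ≠ v}} = k := by
  rw [Fintype.card_congr (Equiv.subtypeEquivRight (q := fun u => ¬ (u = v)) (by simp))]
  rw [Fintype.card_subtype_compl, Fintype.card_subtype_eq, h]
  omega

lemma EE_del_top {V : Type*} [Fintype V] [DecidableEq V] (v : V) {k : ℕ}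
    (h : Fintype.card V = k + 1) :
    EE ((⊤ : SimpleGraph V).induce {u | u ≠ v}) = EE (⊤ : SimpleGraph (Fin k)) := by
  refine EE_eq_top _ (Fintype.equivFinOfCardEq (card_del v h)) fun a b => ?_
  simp [Subtype.coe_injective.ne_iff, ← Subtype.ext_iff]

lemma EE_del_path3_0 :
    EE ((pathGraph 3).induce {u | u ≠ (0 : Fin 3)}) = EE (⊤ : SimpleGraph (Fin 2)) := by
  have hcard : Fintype.card {u : Fin 3 // u ∈ {u | u ≠ (0 : Fin 3)}} = 2 :=
    card_del (0 : Fin 3) rfl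
  refine EE_eq_top _ (Fintype.equivFinOfCardEq hcard) fun a b => ?_
  rcases a with ⟨a, ha⟩
  rcases b with ⟨b, hb⟩
  simp only [Set.mem_setOf_eq] at ha hb
  simp only [comap_adj, Function.Embedding.coe_subtype, ne_eq, Subtype.mk.injEq]
  fin_cases a <;> fin_cases b <;>
    simp_all [SimpleGraph.pathGraph_adj] <;> omega

lemma EE_del_path3_2 :
    EE ((pathGraph 3).induce {u | u ≠ (2 : Fin 3)}) = EE (⊤ : SimpleGraph (Fin 2)) := by
  have hcard : Fintype.card {u : Fin 3 // u ∈ {u | u ≠ (2 : Fin 3)}} = 2 :=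
    card_del (2 : Fin 3) rfl
  refine EE_eq_top _ (Fintype.equivFinOfCardEq hcard) fun a b => ?_
  rcases a with ⟨a, ha⟩
  rcases b with ⟨b, hb⟩
  simp only [Set.mem_setOf_eq] at ha hb
  simp only [comap_adj, Function.Embedding.coe_subtype, ne_eq, Subtype.mk.injEq]
  fin_cases a <;> fin_cases b <;>
    simp_all [SimpleGraph.pathGraph_adj] <;> omega

lemma EE_del_path3_1 :
    EE ((pathGraph 3).induce {u | u ≠ (1 : Fin 3)}) = EE (⊥ : SimpleGraph (Fin 2)) := by
  have hcard : Fintype.card {u : Fin 3 // u ∈ {u | u ≠ (1 : Fin 3)}} = 2 :=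
    card_del (1 : Fin 3) rfl
  refine EE_eq_bot _ (Fintype.equivFinOfCardEq hcard) fun a b => ?_
  rcases a with ⟨a, ha⟩
  rcases b with ⟨b, hb⟩
  simp only [Set.mem_setOf_eq] at ha hb
  simp only [comap_adj, Function.Embedding.coe_subtype]
  fin_cases a <;> fin_cases b <;>
    simp_all [SimpleGraph.pathGraph_adj] <;> omega

/-- `e(K₄ ∪ P₃) = e(K₂ ∪ K₂ ∪ P₃)`. -/
theorem localEnergy_K4_P3 :
    localEnergy ((⊤ : SimpleGraph (Fin 4)) ⊕g pathGraph 3) =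
      localEnergy (((⊤ : SimpleGraph (Fin 2)) ⊕g (⊤ : SimpleGraph (Fin 2)))
        ⊕g pathGraph 3) := by
  have hE1 : EE ((⊤ : SimpleGraph (Fin 4)) ⊕g pathGraph 3) = 6 + 2 * Real.sqrt 2 := by
    rw [EE_sum, EE_top4, EE_path3]
  have hE2 : EE (((⊤ : SimpleGraph (Fin 2)) ⊕g (⊤ : SimpleGraph (Fin 2))) ⊕g pathGraph 3)
      = 4 + 2 * Real.sqrt 2 := by
    rw [EE_sum, EE_sum, EE_top2, EE_path3]; ring
  have h1 : ∀ v : Fin 4,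
      EE (((⊤ : SimpleGraph (Fin 4)) ⊕g pathGraph 3).induce {u | u ≠ Sum.inl v})
        = 4 + 2 * Real.sqrt 2 := fun v => by
    rw [EE_induce_sum_inl, EE_del_top v (by rfl : Fintype.card (Fin 4) = 3 + 1),
      EE_top3, EE_path3]
  have h2 : ∀ j : Fin 3,
      EE (((⊤ : SimpleGraph (Fin 4)) ⊕g pathGraph 3).induce {u | u ≠ Sum.inr j})
        = 6 + EE ((pathGraph 3).induce {u | u ≠ j}) := fun j => by
    rw [EE_induce_sum_inr, EE_top4]
  have h3 : ∀ v : Fin 2,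
      EE ((((⊤ : SimpleGraph (Fin 2)) ⊕g (⊤ : SimpleGraph (Fin 2))) ⊕g pathGraph 3).induce
        {u | u ≠ Sum.inl (Sum.inl v)}) = 2 + 2 * Real.sqrt 2 := fun v => by
    rw [EE_induce_sum_inl, EE_induce_sum_inl, EE_del_top v (by rfl : Fintype.card (Fin 2) = 1 + 1),
      EE_top1, EE_top2, EE_path3]
    ring
  have h4 : ∀ v : Fin 2,
      EE ((((⊤ : SimpleGraph (Fin 2)) ⊕g (⊤ : SimpleGraph (Fin 2))) ⊕g pathGraph 3).induce
        {u | u ≠ Sum.inl (Sum.inr v)}) = 2 + 2 * Real.sqrt 2 := fun v => by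
    rw [EE_induce_sum_inl, EE_induce_sum_inr, EE_del_top v (by rfl : Fintype.card (Fin 2) = 1 + 1),
      EE_top1, EE_top2, EE_path3]
    ring
  have h5 : ∀ j : Fin 3,
      EE ((((⊤ : SimpleGraph (Fin 2)) ⊕g (⊤ : SimpleGraph (Fin 2))) ⊕g pathGraph 3).induce
        {u | u ≠ Sum.inr j}) = 4 + EE ((pathGraph 3).induce {u | u ≠ j}) := fun j => by
    rw [EE_induce_sum_inr, EE_sum, EE_top2]
    ring
  have hp0 : EE ((pathGraph 3).induce {u | u ≠ (0 : Fin 3)}) = 2 := by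
    rw [EE_del_path3_0, EE_top2]
  have hp1 : EE ((pathGraph 3).induce {u | u ≠ (1 : Fin 3)}) = 0 := by
    rw [EE_del_path3_1, EE_bot2]
  have hp2 : EE ((pathGraph 3).induce {u | u ≠ (2 : Fin 3)}) = 2 := by
    rw [EE_del_path3_2, EE_top2]
  simp only [localEnergy, localEnergyAt, graphEnergy_eq, Fintype.sum_sum_type,
    Fin.sum_univ_four, Fin.sum_univ_two, Fin.sum_univ_three]
  rw [hE1, hE2, h1 0, h1 1, h1 2, h1 3, h2 0, h2 1, h2 2, h3 0, h3 1, h4 0, h4 1,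
    h5 0, h5 1, h5 2, hp0, hp1, hp2]
  ring
end

section
/- The graphs K₈, K₆ ∪ K₂, K₅ ∪ K₃, K₄ ∪ K₄, K₃ ∪ K₃ ∪ K₂, C₅ ∪ K₃, and K₂ ∪ K₂ ∪ K₂ ∪ K₂ are pairwise locally equienergetic: e(K₈) = e(K₆ ∪ K₂) = e(K₅ ∪ K₃) = e(K₄ ∪ K₄) = e(K₃ ∪ K₃ ∪ K₂) = e(C₅ ∪ K₃) = e(K₂ ∪ K₂ ∪ K₂ ∪ K₂). -/
open SimpleGraph Matrix Finset

open Polynomial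

namespace EnergyAux

variable {V : Type*} [Fintype V] [DecidableEq V]

lemma eig_congr {A B : Matrix V V ℝ} (h : A = B) (hA : A.IsHermitian) (hB : B.IsHermitian) :
    hA.eigenvalues = hB.eigenvalues := by subst h; rfl

lemma spectral_real (A : Matrix V V ℝ) (hA : A.IsHermitian) :
    A = (hA.eigenvectorUnitary : Matrix V V ℝ) * diagonal hA.eigenvalues *
      star (hA.eigenvectorUnitary : Matrix V V ℝ) := by
  have := hA.spectral_theorem
  rwa [RCLike.ofReal_real_eq_id, Function.id_comp] at this

lemma charpoly_isHermitian (A : Matrix V V ℝ) (hA : A.IsHermitian) :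
    A.charpoly = ∏ i : V, (X - C (hA.eigenvalues i)) := by
  set U : Matrix V V ℝ := (hA.eigenvectorUnitary : Matrix V V ℝ) with hUdef
  have hU1 : U * star U = 1 := (Matrix.mem_unitaryGroup_iff).mp hA.eigenvectorUnitary.2
  have hA' : A = U * diagonal hA.eigenvalues * star U := spectral_real A hA
  have hcm : charmatrix (diagonal hA.eigenvalues)
      = diagonal (fun i => X - C (hA.eigenvalues i)) := by
    ext i j : 2
    by_cases h : i = j
    · subst h
      rw [charmatrix_apply_eq, Matrix.diagonal_apply_eq, Matrix.diagonal_apply_eq]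
    · rw [charmatrix_apply_ne _ _ _ h, Matrix.diagonal_apply_ne _ h,
        Matrix.diagonal_apply_ne _ h, Polynomial.C_0, neg_zero]
  have hdiag : (diagonal hA.eigenvalues).charpoly = ∏ i : V, (X - C (hA.eigenvalues i)) := by
    rw [Matrix.charpoly, hcm, det_diagonal]
  have hmapC : (U.map (C : ℝ →+* ℝ[X]) : Matrix V V ℝ[X]) * ((star U).map C) = 1 := by
    rw [← Matrix.map_mul, hU1]
    simp
  have hcomm : ∀ M : Matrix V V ℝ,
      (M.map (C : ℝ →+* ℝ[X])) * (Matrix.diagonal fun _ : V => (X : ℝ[X]))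
        = (Matrix.diagonal fun _ : V => (X : ℝ[X])) * (M.map C) := by
    intro M
    ext i j : 2
    rw [Matrix.mul_diagonal, Matrix.diagonal_mul, mul_comm]
  have hexp : charmatrix (diagonal hA.eigenvalues)
      = (Matrix.diagonal fun _ : V => (X : ℝ[X])) - (diagonal hA.eigenvalues).map C := by
    refine Matrix.ext fun i j => ?_
    rw [charmatrix_apply]
    simp [Matrix.diagonal_apply, apply_ite (C : ℝ → ℝ[X])]
  have hexpA : charmatrix A
      = (Matrix.diagonal fun _ : V => (X : ℝ[X])) - A.map C := by
    refine Matrix.ext fun i j => ?_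
    rw [charmatrix_apply]
    simp [Matrix.diagonal_apply]
  have hch : charmatrix A = (U.map (C : ℝ →+* ℝ[X])) *
      charmatrix (diagonal hA.eigenvalues) * ((star U).map C) := by
    rw [hexp, hexpA, Matrix.mul_sub, Matrix.sub_mul]
    congr 1
    · rw [hcomm U, Matrix.mul_assoc, hmapC, Matrix.mul_one]
    · have : A.map (C : ℝ →+* ℝ[X])
          = (U * diagonal hA.eigenvalues * star U).map (C : ℝ →+* ℝ[X]) := by
        exact congrArg (fun M => M.map (C : ℝ →+* ℝ[X])) hA'
      rw [this, Matrix.map_mul, Matrix.map_mul]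
  rw [Matrix.charpoly, hch, Matrix.det_mul, Matrix.det_mul, mul_right_comm,
    ← Matrix.det_mul, hmapC, Matrix.det_one, one_mul, ← Matrix.charpoly, hdiag]

lemma graphEnergy_eq_sum (G : SimpleGraph V) [h : DecidableRel G.Adj] :
    graphEnergy G = ∑ i, |(adjMatrix_isHermitian G).eigenvalues i| := by
  rw [graphEnergy]
  congr 1
  ext i
  congr 1
  apply congrFun
  apply eig_congr
  ext a b
  simp

lemma energy_eq_roots (G : SimpleGraph V) [DecidableRel G.Adj] :
    graphEnergy G = (((G.adjMatrix ℝ).charpoly.roots).map (fun x => |x|)).sum := by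
  rw [graphEnergy_eq_sum]
  have h1 : (G.adjMatrix ℝ).charpoly.roots
      = (univ.val.map (adjMatrix_isHermitian G).eigenvalues) := by
    rw [charpoly_isHermitian _ (adjMatrix_isHermitian G)]
    rw [show (∏ i : V, (X - C ((adjMatrix_isHermitian G).eigenvalues i)))
        = ((univ.val.map (adjMatrix_isHermitian G).eigenvalues).map
            (fun a => X - C a)).prod by
      rw [Multiset.map_map]; rfl]
    exact roots_multiset_prod_X_sub_C _
  rw [h1, Multiset.map_map]
  rfl

lemma graphEnergy_sum_graph {α β : Type*} [Fintype α] [DecidableEq α] [Fintype β] [DecidableEq β]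
    (G : SimpleGraph α) (H : SimpleGraph β) :
    graphEnergy (G ⊕g H) = graphEnergy G + graphEnergy H := by
  classical
  have hadj : (G ⊕g H).adjMatrix ℝ = fromBlocks (G.adjMatrix ℝ) 0 0 (H.adjMatrix ℝ) := by
    ext i j
    cases i <;> cases j <;> simp [fromBlocks]
  rw [energy_eq_roots, energy_eq_roots, energy_eq_roots, hadj,
    Matrix.charpoly_fromBlocks_zero₁₂,
    Polynomial.roots_mul (mul_ne_zero (charpoly_monic _).ne_zero (charpoly_monic _).ne_zero),
    Multiset.map_add, Multiset.sum_add]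

lemma graphEnergy_iso {α β : Type*} [Fintype α] [DecidableEq α] [Fintype β] [DecidableEq β]
    {G : SimpleGraph α} {H : SimpleGraph β} (e : G ≃g H) :
    graphEnergy G = graphEnergy H := by
  classical
  rw [energy_eq_roots, energy_eq_roots]
  have : (H.adjMatrix ℝ) = reindex e.toEquiv e.toEquiv (G.adjMatrix ℝ) := by
    ext i j
    simp only [reindex_apply, submatrix_apply, SimpleGraph.adjMatrix_apply]
    exact if_congr (e.symm.map_adj_iff).symm rfl rfl
  rw [this, Matrix.charpoly_reindex]

lemma conj_pow (U D : Matrix V V ℝ) (hU2 : star U * U = 1) (k : ℕ) :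
    (U * D * star U) ^ (k + 1) = U * D ^ (k + 1) * star U := by
  induction k with
  | zero => simp
  | succ n ih =>
      rw [pow_succ, ih]
      calc U * D ^ (n + 1) * star U * (U * D * star U)
          = U * D ^ (n + 1) * (star U * U * (D * star U)) := by
            simp only [Matrix.mul_assoc]
        _ = U * D ^ (n + 1) * (D * star U) := by rw [hU2, Matrix.one_mul]
        _ = U * (D ^ (n + 1) * D) * star U := by simp only [Matrix.mul_assoc]
        _ = U * D ^ (n + 1 + 1) * star U := by rw [← pow_succ]

lemma trace_pow_eq (A : Matrix V V ℝ) (hA : A.IsHermitian) (k : ℕ) :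
    (A ^ (k + 1)).trace = ∑ i, hA.eigenvalues i ^ (k + 1) := by
  set U : Matrix V V ℝ := (hA.eigenvectorUnitary : Matrix V V ℝ) with hUdef
  have hU2 : star U * U = 1 := (Matrix.mem_unitaryGroup_iff').mp hA.eigenvectorUnitary.2
  have h0 := congrArg (fun M : Matrix V V ℝ => (M ^ (k + 1)).trace) (spectral_real A hA)
  rw [h0, conj_pow _ _ hU2, Matrix.trace_mul_cycle, hU2, Matrix.one_mul,
    Matrix.diagonal_pow, Matrix.trace_diagonal]
  simp

omit [DecidableEq V] in
lemma sum_mulVec' {n : Type*} (s : Finset n) (F : n → Matrix V V ℝ) (v : V → ℝ) :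
    (∑ x ∈ s, F x) *ᵥ v = ∑ x ∈ s, (F x *ᵥ v) := by
  classical
  induction s using Finset.induction with
  | empty => simp [Matrix.zero_mulVec]
  | insert _ _ hx ih => simp [Finset.sum_insert hx, Matrix.add_mulVec, ih]

lemma eigenvalues_root (A : Matrix V V ℝ) (hA : A.IsHermitian) (p : Polynomial ℝ)
    (hp : Polynomial.aeval A p = 0) (i : V) : p.eval (hA.eigenvalues i) = 0 := by
  set v : V → ℝ := ⇑(hA.eigenvectorBasis i) with hv
  have hv0 : v ≠ 0 := by
    have := hA.eigenvectorBasis.orthonormal.ne_zero i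
    intro hc
    apply this
    ext j
    exact congrFun hc j
  have hAv : A *ᵥ v = hA.eigenvalues i • v := hA.mulVec_eigenvectorBasis i
  have hpow : ∀ n : ℕ, (A ^ n) *ᵥ v = (hA.eigenvalues i ^ n) • v := by
    intro n
    induction n with
    | zero => simp
    | succ m ih =>
        rw [pow_succ, ← Matrix.mulVec_mulVec, hAv, Matrix.mulVec_smul, ih, smul_smul,
          pow_succ, mul_comm]
  have key : (Polynomial.aeval A p) *ᵥ v = (p.eval (hA.eigenvalues i)) • v := by
    rw [Polynomial.aeval_eq_sum_range, Polynomial.eval_eq_sum_range, sum_mulVec',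
      Finset.sum_smul]
    refine Finset.sum_congr rfl fun n _ => ?_
    rw [Matrix.smul_mulVec, hpow, smul_smul]
  rw [hp] at key
  have h0 : (p.eval (hA.eigenvalues i)) • v = 0 := by
    rw [← key]; simp
  rcases smul_eq_zero.mp h0 with h | h
  · exact h
  · exact absurd h hv0

omit [DecidableEq V] in
lemma sum_comp_eq {S : Finset ℝ} {f : V → ℝ} (h : ∀ i, f i ∈ S) (g : ℝ → ℝ) :
    ∑ i, g (f i) = ∑ x ∈ S, ((univ.filter fun i => f i = x).card : ℝ) * g x := by
  classical
  rw [← Finset.sum_fiberwise_of_maps_to (fun i _ => h i) (fun i => g (f i))]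
  refine Finset.sum_congr rfl fun x _ => ?_
  rw [Finset.sum_congr rfl (fun i hi => by
    rw [show f i = x from (Finset.mem_filter.mp hi).2]), Finset.sum_const, nsmul_eq_mul]

end EnergyAux
namespace EnergyAux

variable {V : Type*} [Fintype V] [DecidableEq V]

lemma induce_top (s : Set V) : (⊤ : SimpleGraph V).induce s = (⊤ : SimpleGraph (↥s)) := by
  ext a b
  simp [Subtype.coe_ne_coe]

lemma graphEnergy_top (h1 : 1 ≤ Fintype.card V) :
    graphEnergy (⊤ : SimpleGraph V) = 2 * (Fintype.card V : ℝ) - 2 := by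
  classical
  set n := Fintype.card V with hn
  have hn1 : (1:ℝ) ≤ (n:ℝ) := by exact_mod_cast h1
  set A := (⊤ : SimpleGraph V).adjMatrix ℝ with hAdef
  have hA := adjMatrix_isHermitian (⊤ : SimpleGraph V)
  set f := hA.eigenvalues with hf
  have honee : ∀ k j : V, (A + 1) k j = 1 := by
    intro k j
    by_cases hkj : k = j
    · subst hkj; simp [hAdef]
    · simp [hAdef, hkj, Matrix.one_apply_ne hkj]
  have hrow : ∀ i : V, ∑ k, A i k = (n:ℝ) - 1 := by
    intro i
    have h2 : ∀ k, A i k = 1 - if i = k then 1 else 0 := by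
      intro k
      by_cases hik : i = k
      · subst hik; simp [hAdef]
      · simp [hAdef, hik, Ne.symm hik]
    rw [Finset.sum_congr rfl fun k _ => h2 k, Finset.sum_sub_distrib, Finset.sum_const]
    rw [Finset.sum_ite_eq univ i (fun _ => (1:ℝ)), if_pos (Finset.mem_univ i)]
    simp [hn]
  have hmul : (A - ((n:ℝ)-1) • (1 : Matrix V V ℝ)) * (A + 1) = 0 := by
    refine Matrix.ext fun i j => ?_
    rw [Matrix.mul_apply]
    rw [Finset.sum_congr rfl fun k _ => by rw [honee k j, mul_one]]
    change ∑ k, (A - ((n:ℝ)-1) • (1 : Matrix V V ℝ)) i k = (0:ℝ)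
    simp only [Matrix.sub_apply, Matrix.smul_apply, smul_eq_mul]
    rw [Finset.sum_sub_distrib, hrow i]
    have hsum1 : ∑ k, ((n:ℝ)-1) * (1 : Matrix V V ℝ) i k = (n:ℝ) - 1 := by
      rw [Finset.sum_congr rfl fun k _ => by rw [Matrix.one_apply, mul_ite, mul_one, mul_zero]]
      simp
    rw [hsum1]
    simp
  have haeval : Polynomial.aeval A ((Polynomial.X - Polynomial.C ((n:ℝ)-1)) *
      (Polynomial.X + 1)) = 0 := by
    rw [_root_.map_mul, _root_.map_sub, _root_.map_add, Polynomial.aeval_X, Polynomial.aeval_C, _root_.map_one,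
      Algebra.algebraMap_eq_smul_one]
    exact hmul
  have hvals : ∀ i, f i = (n:ℝ)-1 ∨ f i = -1 := by
    intro i
    have heval := eigenvalues_root A hA _ haeval i
    rw [Polynomial.eval_mul, Polynomial.eval_sub, Polynomial.eval_add, Polynomial.eval_X,
      Polynomial.eval_C, Polynomial.eval_one] at heval
    rcases mul_eq_zero.mp heval with h | h
    · left; linarith [sub_eq_zero.mp h]
    · right; linarith
  have hne : ((n:ℝ) - 1) ≠ -1 := by intro hc; linarith
  set S : Finset ℝ := {(n:ℝ)-1, -1} with hS
  have hmem : ∀ i, f i ∈ S := by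
    intro i
    rcases hvals i with h | h <;> simp [hS, h]
  set a := ((univ.filter fun i => f i = (n:ℝ)-1).card : ℝ) with hadef
  set b := ((univ.filter fun i => f i = -1).card : ℝ) with hbdef
  have hexpand : ∀ g : ℝ → ℝ, ∑ i, g (f i) = a * g ((n:ℝ)-1) + b * g (-1) := by
    intro g
    rw [sum_comp_eq hmem g, hS, Finset.sum_insert (by simpa using hne), Finset.sum_singleton]
  have hcard : (n:ℝ) = a + b := by
    have hh := hexpand (fun _ => (1:ℝ))
    simpa [hn, Finset.card_univ] using hh
  have hsumf : ∑ i, f i = 0 := by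
    have h1' := trace_pow_eq A hA 0
    simp only [zero_add, pow_one] at h1'
    have htr0 : A.trace = 0 := by simp [hAdef, Matrix.trace, Matrix.diag]
    rw [← h1', htr0]
  have htr : (0:ℝ) = a * ((n:ℝ)-1) + b * (-1) := by
    have hh := hexpand id
    simp only [id] at hh
    rw [← hsumf, hh]
  have henergy : graphEnergy (⊤ : SimpleGraph V) = a * ((n:ℝ)-1) + b * 1 := by
    rw [graphEnergy_eq_sum]
    have h3 := hexpand (fun x => |x|)
    rw [h3, abs_of_nonneg (by linarith : (0:ℝ) ≤ (n:ℝ)-1), abs_neg, abs_one]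
  have hn0 : (n:ℝ) ≠ 0 := ne_of_gt (by linarith)
  have han : a * (n:ℝ) = 1 * (n:ℝ) := by nlinarith [htr, hcard]
  have ha1 : a = 1 := mul_right_cancel₀ hn0 han
  have hb : b = (n:ℝ) - 1 := by linarith
  rw [henergy, ha1, hb]
  ring

lemma localEnergyAt_top (h2 : 2 ≤ Fintype.card V) (v : V) :
    localEnergyAt (⊤ : SimpleGraph V) v = 2 := by
  classical
  rw [localEnergyAt, induce_top]
  have hc : Fintype.card ({u | u ≠ v} : Set V) = Fintype.card V - 1 := Set.card_ne_eq v
  rw [graphEnergy_top (by omega), graphEnergy_top (by rw [hc]; omega), hc,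
    Nat.cast_sub (by omega)]
  push_cast
  ring

lemma localEnergy_top (h2 : 2 ≤ Fintype.card V) :
    localEnergy (⊤ : SimpleGraph V) = 2 * (Fintype.card V : ℝ) := by
  rw [localEnergy, Finset.sum_congr rfl fun v _ => localEnergyAt_top h2 v]
  simp [Finset.card_univ, mul_comm]

def isoInduceNe {α β : Type*} {G : SimpleGraph α} {H : SimpleGraph β} (e : G ≃g H) (v : α) :
    G.induce {u | u ≠ v} ≃g H.induce {u | u ≠ e v} where
  toEquiv := e.toEquiv.subtypeEquiv (fun a => by
    simp only [Set.mem_setOf_eq]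
    exact not_congr (EmbeddingLike.apply_eq_iff_eq e.toEquiv).symm)
  map_rel_iff' := by
    intro a b
    simp only [Equiv.subtypeEquiv_apply, SimpleGraph.comap_adj, Function.Embedding.coe_subtype]
    exact e.map_adj_iff

end EnergyAux

namespace EnergyAux

def sumInduceInl {α β : Type*} (G : SimpleGraph α) (H : SimpleGraph β) (x : α) :
    (G ⊕g H).induce {u | u ≠ Sum.inl x} ≃g ((G.induce {w | w ≠ x}) ⊕g H) where
  toEquiv :=
    { toFun := fun u => match u with
        | ⟨Sum.inl a, h⟩ => Sum.inl ⟨a, by simpa using h⟩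
        | ⟨Sum.inr b, _⟩ => Sum.inr b
      invFun := fun u => match u with
        | Sum.inl ⟨a, h⟩ => ⟨Sum.inl a, by simpa using h⟩
        | Sum.inr b => ⟨Sum.inr b, by simp⟩
      left_inv := by rintro ⟨(a | b), h⟩ <;> rfl
      right_inv := by rintro (⟨a, h⟩ | b) <;> rfl }
  map_rel_iff' := by
    rintro ⟨(a | b), ha⟩ ⟨(c | d), hc⟩ <;>
      simp [SimpleGraph.comap_adj]

end EnergyAux

namespace EnergyAux

/-- The path graph on 4 vertices. -/
def P4 : SimpleGraph (Fin 4) where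
  Adj a b := b.val = a.val + 1 ∨ a.val = b.val + 1
  symm := by constructor; intro a b h; tauto
  loopless := by constructor; intro a h; omega

instance : DecidableRel P4.Adj := fun a b => inferInstanceAs (Decidable (_ ∨ _))

lemma sqrt5_sq : Real.sqrt 5 ^ 2 = 5 := Real.sq_sqrt (by norm_num)

lemma sqrt5_gt : 2 < Real.sqrt 5 := by
  nlinarith [sqrt5_sq, Real.sqrt_nonneg 5]

lemma sqrt5_lt : Real.sqrt 5 < 3 := by
  nlinarith [sqrt5_sq, Real.sqrt_nonneg 5]

lemma adjMatrix_P4 : P4.adjMatrix ℝ = !![0,1,0,0; 1,0,1,0; 0,1,0,1; 0,0,1,0] := by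
  ext i j
  fin_cases i <;> fin_cases j <;> rw [SimpleGraph.adjMatrix_apply] <;>
    simp [SimpleGraph.adjMatrix_apply, P4, Matrix.vecHead, Matrix.vecTail] <;>
    (try omega) <;> (try norm_num)

set_option maxHeartbeats 2000000 in
lemma graphEnergy_P4 : graphEnergy P4 = 2 * Real.sqrt 5 := by
  classical
  set s := Real.sqrt 5 with hsdef
  have hs : s ^ 2 = 5 := sqrt5_sq
  have hs2 : 2 < s := sqrt5_gt
  have hs3 : s < 3 := sqrt5_lt
  set A := P4.adjMatrix ℝ with hAdef
  have hA := adjMatrix_isHermitian P4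
  set f := hA.eigenvalues with hf
  have hA4 := adjMatrix_P4
  have hsq : A * A = !![1,0,1,0; 0,2,0,1; 1,0,2,0; 0,1,0,1] := by
    rw [hAdef, hA4]
    ext i j
    fin_cases i <;> fin_cases j <;>
      simp [Matrix.mul_apply, Fin.sum_univ_four, Matrix.vecHead, Matrix.vecTail] <;>
      (try omega) <;> (try norm_num)
  have hquart : (A * A - A - 1) * (A * A + A - 1) = 0 := by
    rw [hsq, hAdef, hA4]
    ext i j
    fin_cases i <;> fin_cases j <;>
      simp [Matrix.mul_apply, Fin.sum_univ_four, Matrix.one_apply, Matrix.vecHead,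
        Matrix.vecTail] <;>
      (try omega) <;> (try norm_num)
  have haeval : Polynomial.aeval A
      (((X * X - X - 1) * (X * X + X - 1) : Polynomial ℝ)) = 0 := by
    have expand : Polynomial.aeval A (((X * X - X - 1) * (X * X + X - 1) : Polynomial ℝ))
        = (A * A - A - 1) * (A * A + A - 1) := by
      simp only [_root_.map_mul, _root_.map_sub, _root_.map_add, _root_.map_one,
        Polynomial.aeval_X]
    rw [expand]
    exact hquart
  set r1 : ℝ := (1 + s)/2 with hr1
  set r2 : ℝ := (s - 1)/2 with hr2
  have hvals : ∀ i, f i = r1 ∨ f i = r2 ∨ f i = -r2 ∨ f i = -r1 := by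
    intro i
    have heval := eigenvalues_root A hA _ haeval i
    rw [← hf] at heval
    simp only [Polynomial.eval_mul, Polynomial.eval_sub, Polynomial.eval_add,
      Polynomial.eval_X, Polynomial.eval_one] at heval
    have hfac : (f i - r1) * (f i - (-r2)) * ((f i - r2) * (f i - (-r1))) = 0 := by
      rw [hr1, hr2]
      linear_combination heval + ((1 - (f i)^2)/2 + (s^2 - 5)/16) * hs
    rcases mul_eq_zero.mp hfac with h | h
    · rcases mul_eq_zero.mp h with h' | h'
      · left; linarith [sub_eq_zero.mp h']
      · right; right; left; linarith [sub_eq_zero.mp h']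
    · rcases mul_eq_zero.mp h with h' | h'
      · right; left; linarith [sub_eq_zero.mp h']
      · right; right; right; linarith [sub_eq_zero.mp h']

  set S : Finset ℝ := {r1, r2, -r2, -r1} with hS
  have hmem : ∀ i, f i ∈ S := by
    intro i
    rcases hvals i with h | h | h | h <;> simp [hS, h]
  have hnm1 : r1 ∉ ({r2, -r2, -r1} : Finset ℝ) := by
    simp only [Finset.mem_insert, Finset.mem_singleton]
    push_neg
    refine ⟨?_, ?_, ?_⟩ <;> (intro h; simp only [hr1, hr2] at h; linarith)
  have hnm2 : r2 ∉ ({-r2, -r1} : Finset ℝ) := by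
    simp only [Finset.mem_insert, Finset.mem_singleton]
    push_neg
    refine ⟨?_, ?_⟩ <;> (intro h; simp only [hr1, hr2] at h; linarith)
  have hnm3 : -r2 ∉ ({-r1} : Finset ℝ) := by
    simp only [Finset.mem_singleton]
    intro h; simp only [hr1, hr2] at h; linarith
  set a := ((univ.filter fun i => f i = r1).card : ℝ) with hadef
  set b := ((univ.filter fun i => f i = r2).card : ℝ) with hbdef
  set c := ((univ.filter fun i => f i = -r2).card : ℝ) with hcdef
  set d := ((univ.filter fun i => f i = -r1).card : ℝ) with hddef
  have hexpand : ∀ g : ℝ → ℝ,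
      ∑ i, g (f i) = a * g r1 + b * g r2 + c * g (-r2) + d * g (-r1) := by
    intro g
    rw [sum_comp_eq hmem g, hS, Finset.sum_insert hnm1, Finset.sum_insert hnm2,
      Finset.sum_insert hnm3, Finset.sum_singleton]
    ring
  have hcard : (4:ℝ) = a + b + c + d := by
    have hh := hexpand (fun _ => (1:ℝ))
    simpa [Finset.card_univ] using hh
  have htrsq : ∑ i, f i ^ 2 = 6 := by
    have h1' := trace_pow_eq A hA 1
    rw [← h1']
    rw [show A ^ 2 = A * A by rw [pow_two], hsq]
    simp [Matrix.trace, Matrix.diag, Fin.sum_univ_four]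
    norm_num
  have heq2 : (6:ℝ) = a * r1^2 + b * r2^2 + c * r2^2 + d * r1^2 := by
    have hh := hexpand (fun x => x^2)
    rw [htrsq] at hh
    rw [hh]; ring
  have henergy : graphEnergy P4 = a * |r1| + b * |r2| + c * |(-r2)| + d * |(-r1)| := by
    rw [graphEnergy_eq_sum]
    exact hexpand (fun x => |x|)
  clear_value a b c d
  have hsum24 : s * ((a + d) - (b + c)) = 0 := by
    have e1 : r1^2 = (3 + s)/2 := by rw [hr1]; linear_combination (1/4 : ℝ) * hs
    have e2 : r2^2 = (3 - s)/2 := by rw [hr2]; linear_combination (1/4 : ℝ) * hs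
    rw [e1, e2] at heq2
    linarith [heq2, hcard]
  have hs0 : s ≠ 0 := by linarith
  have had : a + d = 2 := by
    have h0 : (a + d) - (b + c) = 0 := by
      rcases mul_eq_zero.mp hsum24 with h | h
      · exact absurd h hs0
      · exact h
    linarith
  have hbc : b + c = 2 := by linarith
  have hr1pos : (0:ℝ) < r1 := by rw [hr1]; linarith
  have hr2pos : (0:ℝ) < r2 := by rw [hr2]; linarith
  have habs1 : |r1| = r1 := abs_of_pos hr1pos
  have habs2 : |r2| = r2 := abs_of_pos hr2pos
  have habs3 : |(-r2)| = r2 := by rw [abs_neg]; exact habs2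
  have habs4 : |(-r1)| = r1 := by rw [abs_neg]; exact habs1
  rw [henergy, habs1, habs2, habs3, habs4]
  have hre : a * r1 + b * r2 + c * r2 + d * r1 = r1 * (a + d) + r2 * (b + c) := by ring
  rw [hre, had, hbc, hr1, hr2]
  ring

end EnergyAux

namespace EnergyAux

lemma adjMatrix_C5 : (cycleGraph 5).adjMatrix ℝ
    = !![0,1,0,0,1; 1,0,1,0,0; 0,1,0,1,0; 0,0,1,0,1; 1,0,0,1,0] := by
  ext i j
  fin_cases i <;> fin_cases j <;>
    simp [SimpleGraph.adjMatrix_apply, SimpleGraph.cycleGraph_adj, Matrix.vecHead,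
      Matrix.vecTail] <;>
    (try omega) <;> (try norm_num) <;> (try decide)

set_option maxHeartbeats 2000000 in
lemma graphEnergy_C5 : graphEnergy (cycleGraph 5) = 2 + 2 * Real.sqrt 5 := by
  classical
  set s := Real.sqrt 5 with hsdef
  have hs : s ^ 2 = 5 := sqrt5_sq
  have hs2 : 2 < s := sqrt5_gt
  have hs3 : s < 3 := sqrt5_lt
  set A := (cycleGraph 5).adjMatrix ℝ with hAdef
  have hA := adjMatrix_isHermitian (cycleGraph 5)
  set f := hA.eigenvalues with hf
  have hA5 := adjMatrix_C5
  have hsq : A * A = !![2,0,1,1,0; 0,2,0,1,1; 1,0,2,0,1; 1,1,0,2,0; 0,1,1,0,2] := by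
    rw [hAdef, hA5]
    ext i j
    fin_cases i <;> fin_cases j <;>
      simp [Matrix.mul_apply, Fin.sum_univ_five, Matrix.vecHead, Matrix.vecTail] <;>
      (try omega) <;> (try norm_num)
  have hJ : A * A + A - 1 = Matrix.of (fun _ _ : Fin 5 => (1:ℝ)) := by
    rw [hsq, hAdef, hA5]
    ext i j
    fin_cases i <;> fin_cases j <;>
      simp [Matrix.one_apply, Matrix.vecHead, Matrix.vecTail] <;>
      (try omega) <;> (try norm_num)
  have hcube : (A - (2:ℝ) • (1 : Matrix (Fin 5) (Fin 5) ℝ)) * (A * A + A - 1) = 0 := by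
    rw [hJ, hAdef, hA5]
    ext i j
    rw [Matrix.mul_apply]
    fin_cases i <;>
      simp [Fin.sum_univ_five, Matrix.one_apply, Matrix.vecHead, Matrix.vecTail] <;>
      norm_num
  have haeval : Polynomial.aeval A
      (((X - Polynomial.C 2) * (X * X + X - 1) : Polynomial ℝ)) = 0 := by
    have expand : Polynomial.aeval A (((X - Polynomial.C 2) * (X * X + X - 1) : Polynomial ℝ))
        = (A - (2:ℝ) • 1) * (A * A + A - 1) := by
      simp only [_root_.map_mul, _root_.map_sub, _root_.map_add, _root_.map_one,
        Polynomial.aeval_X, Polynomial.aeval_C, Algebra.algebraMap_eq_smul_one]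
    rw [expand]
    exact hcube
  set r1 : ℝ := (1 + s)/2 with hr1
  set r2 : ℝ := (s - 1)/2 with hr2
  have hvals : ∀ i, f i = 2 ∨ f i = r2 ∨ f i = -r1 := by
    intro i
    have heval := eigenvalues_root A hA _ haeval i
    rw [← hf] at heval
    simp only [Polynomial.eval_mul, Polynomial.eval_sub, Polynomial.eval_add,
      Polynomial.eval_X, Polynomial.eval_one, Polynomial.eval_C] at heval
    have hfac : (f i - 2) * ((f i - r2) * (f i - (-r1))) = 0 := by
      rw [hr1, hr2]
      linear_combination heval + ((f i - 2)/4 + 1 - (f i)/2) * hs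
    rcases mul_eq_zero.mp hfac with h | h
    · left; linarith [sub_eq_zero.mp h]
    · rcases mul_eq_zero.mp h with h' | h'
      · right; left; linarith [sub_eq_zero.mp h']
      · right; right; linarith [sub_eq_zero.mp h']
  set S : Finset ℝ := {2, r2, -r1} with hS
  have hmem : ∀ i, f i ∈ S := by
    intro i
    rcases hvals i with h | h | h <;> simp [hS, h]
  have hnm1 : (2:ℝ) ∉ ({r2, -r1} : Finset ℝ) := by
    simp only [Finset.mem_insert, Finset.mem_singleton]
    push_neg
    refine ⟨?_, ?_⟩ <;> (intro h; simp only [hr1, hr2] at h; linarith)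
  have hnm2 : r2 ∉ ({-r1} : Finset ℝ) := by
    simp only [Finset.mem_singleton]
    intro h; simp only [hr1, hr2] at h; linarith
  set a := ((univ.filter fun i => f i = (2:ℝ)).card : ℝ) with hadef
  set b := ((univ.filter fun i => f i = r2).card : ℝ) with hbdef
  set c := ((univ.filter fun i => f i = -r1).card : ℝ) with hcdef
  have hexpand : ∀ g : ℝ → ℝ,
      ∑ i, g (f i) = a * g 2 + b * g r2 + c * g (-r1) := by
    intro g
    rw [sum_comp_eq hmem g, hS, Finset.sum_insert hnm1, Finset.sum_insert hnm2,
      Finset.sum_singleton]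
    ring
  have hcard : (5:ℝ) = a + b + c := by
    have hh := hexpand (fun _ => (1:ℝ))
    simpa [Finset.card_univ] using hh
  have htrv : ∑ i, f i = 0 := by
    have h1' := trace_pow_eq A hA 0
    simp only [zero_add, pow_one] at h1'
    have htr0 : A.trace = 0 := by
      rw [hAdef, adjMatrix_C5]
      simp [Matrix.trace, Matrix.diag, Fin.sum_univ_five, Matrix.vecHead, Matrix.vecTail]
    rw [← h1', htr0]
  have htr : (0:ℝ) = 2 * a + r2 * b + (-r1) * c := by
    have hh := hexpand id
    simp only [id] at hh
    rw [← htrv, hh]; ring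
  have htrsq : ∑ i, f i ^ 2 = 10 := by
    have h1' := trace_pow_eq A hA 1
    rw [← h1']
    rw [show A ^ 2 = A * A by rw [pow_two], hsq]
    simp [Matrix.trace, Matrix.diag, Fin.sum_univ_five, Matrix.vecHead, Matrix.vecTail]
    norm_num
  have heq2 : (10:ℝ) = 4 * a + r2^2 * b + r1^2 * c := by
    have hh := hexpand (fun x => x^2)
    rw [htrsq] at hh
    rw [hh]; ring
  have henergy : graphEnergy (cycleGraph 5) = a * |(2:ℝ)| + b * |r2| + c * |(-r1)| := by
    rw [graphEnergy_eq_sum]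
    exact hexpand (fun x => |x|)
  have htr' : (0:ℝ) = 2*a + ((s-1)/2) * b + (-((1+s)/2)) * c := by
    rw [hr1, hr2] at htr; exact htr
  have heq2' : (10:ℝ) = 4*a + (((s-1)/2)^2) * b + (((1+s)/2)^2) * c := by
    rw [hr1, hr2] at heq2; exact heq2
  clear_value a b c
  have e2' : (20:ℝ) = 8*a + 3*b + 3*c - s*b + s*c := by
    linear_combination 2 * heq2' + ((b + c)/2) * hs
  have t2' : (0:ℝ) = 4*a + s*b - b - s*c - c := by
    linear_combination 2 * htr'
  have ha : a = 1 := by linarith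
  have hsb : s * (b - 2) = 0 := by
    linear_combination (-1:ℝ) * htr' - ((s+1)/2) * hcard - ((5+s)/2) * ha
  have hb : b = 2 := by
    rcases mul_eq_zero.mp hsb with h | h
    · exact absurd h (by linarith : s ≠ 0)
    · linarith
  have hc : c = 2 := by linarith
  have hr1pos : (0:ℝ) < r1 := by rw [hr1]; linarith
  have hr2pos : (0:ℝ) < r2 := by rw [hr2]; linarith
  have habs2 : |r2| = r2 := abs_of_pos hr2pos
  have habs3 : |(-r1)| = r1 := by rw [abs_neg]; exact abs_of_pos hr1pos
  rw [henergy, habs2, habs3, abs_of_pos (by norm_num : (0:ℝ) < 2), ha, hb, hc, hr1, hr2]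
  ring

lemma rot_adj : ∀ (k a b : Fin 5),
    (cycleGraph 5).Adj (k + a) (k + b) ↔ (cycleGraph 5).Adj a b := by decide

def rotIso (k : Fin 5) : cycleGraph 5 ≃g cycleGraph 5 where
  toEquiv := Equiv.addLeft k
  map_rel_iff' := by
    intro a b
    simpa using rot_adj k a b

def c5e : (cycleGraph 5).induce {u | u ≠ (4 : Fin 5)} ≃g P4 where
  toEquiv :=
    { toFun := fun u => ⟨u.1.val, by
        have h : u.1 ≠ (4 : Fin 5) := u.2
        have h2 := u.1.isLt
        have h3 : u.1.val ≠ 4 := by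
          intro hc
          exact h (Fin.ext (by simpa using hc))
        omega⟩
      invFun := fun j => ⟨⟨j.val, by omega⟩, by
        have := j.isLt
        intro hc
        have := congrArg Fin.val hc
        simp at this
        omega⟩
      left_inv := fun u => Subtype.ext (Fin.ext rfl)
      right_inv := fun j => rfl }
  map_rel_iff' := by
    intro a b
    revert a b
    decide

lemma energy_induce_C5 (v : Fin 5) :
    graphEnergy ((cycleGraph 5).induce {u | u ≠ v}) = 2 * Real.sqrt 5 := by
  have e1 := isoInduceNe (rotIso (4 - v)) v
  have h4 : (rotIso (4 - v)) v = (4 : Fin 5) := by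
    show (4 - v) + v = 4
    exact sub_add_cancel 4 v
  rw [h4] at e1
  rw [graphEnergy_iso e1, graphEnergy_iso c5e, graphEnergy_P4]

lemma localEnergy_C5 : localEnergy (cycleGraph 5) = 10 := by
  have hat : ∀ v, localEnergyAt (cycleGraph 5) v = 2 := fun v => by
    rw [localEnergyAt, graphEnergy_C5, energy_induce_C5]; ring
  rw [localEnergy, Finset.sum_congr rfl fun v _ => hat v]
  norm_num

end EnergyAux

namespace EnergyAux

variable {α β : Type*} [Fintype α] [DecidableEq α] [Fintype β] [DecidableEq β]

lemma graphEnergy_induce_sum_inl (G : SimpleGraph α) (H : SimpleGraph β) (x : α) :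
    graphEnergy ((G ⊕g H).induce {u | u ≠ Sum.inl x})
      = graphEnergy (G.induce {w | w ≠ x}) + graphEnergy H := by
  rw [graphEnergy_iso (sumInduceInl G H x), graphEnergy_sum_graph]

lemma localEnergyAt_sum_inl (G : SimpleGraph α) (H : SimpleGraph β) (x : α) :
    localEnergyAt (G ⊕g H) (Sum.inl x) = localEnergyAt G x := by
  rw [localEnergyAt, localEnergyAt, graphEnergy_sum_graph, graphEnergy_induce_sum_inl]
  ring

lemma localEnergyAt_sum_inr (G : SimpleGraph α) (H : SimpleGraph β) (y : β) :
    localEnergyAt (G ⊕g H) (Sum.inr y) = localEnergyAt H y := by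
  have e1 := isoInduceNe (Iso.sumComm (G := G) (H := H)) (Sum.inr y)
  have h2 : (Iso.sumComm (G := G) (H := H)) (Sum.inr y) = Sum.inl y := rfl
  rw [h2] at e1
  rw [localEnergyAt, localEnergyAt, graphEnergy_sum_graph, graphEnergy_iso e1,
    graphEnergy_induce_sum_inl]
  ring

lemma localEnergy_sum_graph (G : SimpleGraph α) (H : SimpleGraph β) :
    localEnergy (G ⊕g H) = localEnergy G + localEnergy H := by
  rw [localEnergy, Fintype.sum_sum_type]
  simp only [localEnergyAt_sum_inl, localEnergyAt_sum_inr]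
  rw [localEnergy, localEnergy]

lemma localEnergy_top_fin (n : ℕ) (hn : 2 ≤ n) :
    localEnergy (⊤ : SimpleGraph (Fin n)) = 2 * (n : ℝ) := by
  rw [localEnergy_top (by simpa using hn)]
  simp

end EnergyAux


/-- `e(K₈) = e(K₆ ∪ K₂) = e(K₅ ∪ K₃) = e(K₄ ∪ K₄) = e(K₃ ∪ K₃ ∪ K₂)
  = e(C₅ ∪ K₃) = e(K₂ ∪ K₂ ∪ K₂ ∪ K₂)`. -/
theorem localEnergy_K8_eq :
    localEnergy (⊤ : SimpleGraph (Fin 8)) =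
      localEnergy ((⊤ : SimpleGraph (Fin 6)) ⊕g (⊤ : SimpleGraph (Fin 2))) ∧
    localEnergy ((⊤ : SimpleGraph (Fin 6)) ⊕g (⊤ : SimpleGraph (Fin 2))) =
      localEnergy ((⊤ : SimpleGraph (Fin 5)) ⊕g (⊤ : SimpleGraph (Fin 3))) ∧
    localEnergy ((⊤ : SimpleGraph (Fin 5)) ⊕g (⊤ : SimpleGraph (Fin 3))) =
      localEnergy ((⊤ : SimpleGraph (Fin 4)) ⊕g (⊤ : SimpleGraph (Fin 4))) ∧
    localEnergy ((⊤ : SimpleGraph (Fin 4)) ⊕g (⊤ : SimpleGraph (Fin 4))) =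
      localEnergy (((⊤ : SimpleGraph (Fin 3)) ⊕g (⊤ : SimpleGraph (Fin 3)))
        ⊕g (⊤ : SimpleGraph (Fin 2))) ∧
    localEnergy (((⊤ : SimpleGraph (Fin 3)) ⊕g (⊤ : SimpleGraph (Fin 3)))
        ⊕g (⊤ : SimpleGraph (Fin 2))) =
      localEnergy (cycleGraph 5 ⊕g (⊤ : SimpleGraph (Fin 3))) ∧
    localEnergy (cycleGraph 5 ⊕g (⊤ : SimpleGraph (Fin 3))) =
      localEnergy ((((⊤ : SimpleGraph (Fin 2)) ⊕g (⊤ : SimpleGraph (Fin 2)))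
        ⊕g (⊤ : SimpleGraph (Fin 2))) ⊕g (⊤ : SimpleGraph (Fin 2))) := by
  refine ⟨?_, ?_, ?_, ?_, ?_, ?_⟩ <;>
    simp only [EnergyAux.localEnergy_sum_graph, EnergyAux.localEnergy_C5,
      EnergyAux.localEnergy_top_fin 8 (by norm_num), EnergyAux.localEnergy_top_fin 6 (by norm_num),
      EnergyAux.localEnergy_top_fin 5 (by norm_num), EnergyAux.localEnergy_top_fin 4 (by norm_num),
      EnergyAux.localEnergy_top_fin 3 (by norm_num),
      EnergyAux.localEnergy_top_fin 2 (by norm_num)] <;>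
    norm_num
end
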